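/- Fix d > 0 and α ∈ ℝ. For η ∈ ℝ with |d η| < 1 set α₁(η) := α − η/(2(1 + d η)), α₂(η) := α + η/(2(1 − d η)), and define Δ(k, η) := (α₁(η) α₂(η) − k²) sin(2 k d) + k (α₁(η) + α₂(η)) cos(2 k d) for k ∈ ℝ. Then for every k ∈ ℝ, the partial derivative of Δ with respect to η vanishes at η = 0: ∂Δ/∂η (k, 0) = 0. (Equivalently, the first-order perturbation coefficient λ_n^{(1)} of each eigenvalue of the perturbed Robin Laplacian vanishes.) -/

import Mathlib

/-- The perturbed Robin boundary constant `α₁(η) = α − η/(2(1+dη))`. -/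
noncomputable def alpha₁ (d α η : ℝ) : ℝ := α - η / (2 * (1 + d * η))

/-- The perturbed Robin boundary constant `α₂(η) = α + η/(2(1−dη))`. -/
noncomputable def alpha₂ (d α η : ℝ) : ℝ := α + η / (2 * (1 - d * η))

/-- The secular function `Δ(k,η)` whose zeros `k` give the eigenvalues `λ = k²` of the
Robin Laplacian on `(−d,d)` with boundary constants `α₁(η), α₂(η)`. -/
noncomputable def Δfun (d α k η : ℝ) : ℝ :=
  (alpha₁ d α η * alpha₂ d α η - k ^ 2) * Real.sin (2 * k * d)
    + k * (alpha₁ d α η + alpha₂ d α η) * Real.cos (2 * k * d)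

lemma hasDerivAt_alpha₁ (d α : ℝ) :
    HasDerivAt (fun η : ℝ => alpha₁ d α η) (-(1/2)) 0 := by
  have hnum : HasDerivAt (fun η : ℝ => η) 1 (0:ℝ) := hasDerivAt_id 0
  have hden : HasDerivAt (fun η : ℝ => 2 * (1 + d * η)) (2 * d) 0 := by
    simpa using (((hasDerivAt_id (0:ℝ)).const_mul d).const_add 1).const_mul 2
  have h := hnum.div hden (by norm_num)
  have h' := h.const_sub α
  convert h' using 1
  · rfl
  · rfl
  · funext η; simp [alpha₁, div_eq_mul_inv]
  · norm_num

lemma hasDerivAt_alpha₂ (d α : ℝ) :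
    HasDerivAt (fun η : ℝ => alpha₂ d α η) (1/2) 0 := by
  have hnum : HasDerivAt (fun η : ℝ => η) 1 (0:ℝ) := hasDerivAt_id 0
  have hden : HasDerivAt (fun η : ℝ => 2 * (1 - d * η)) (2 * (-d)) 0 := by
    have : HasDerivAt (fun η : ℝ => 1 - d * η) (-d) 0 := by
      simpa using ((hasDerivAt_id (0:ℝ)).const_mul d).const_sub 1
    simpa using this.const_mul 2
  have h := hnum.div hden (by norm_num)
  have h' := h.const_add α
  convert h' using 1
  · rfl
  · rfl
  · funext η; simp [alpha₂, div_eq_mul_inv]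
  · norm_num

/-- The first-order derivative of the secular function `Δ(k, η)` with respect
to the perturbation parameter `η` vanishes at `η = 0` for every `k`; equivalently the
first-order perturbation coefficient `λₙ⁽¹⁾` of each eigenvalue vanishes. -/
theorem first_order_perturbation_vanishes
    (d α : ℝ) (hd : 0 < d) (k : ℝ) :
    deriv (fun η : ℝ => Δfun d α k η) 0 = 0 := by
  have h1 := hasDerivAt_alpha₁ d α
  have h2 := hasDerivAt_alpha₂ d α
  have ha1 : alpha₁ d α 0 = α := by simp [alpha₁]
  have ha2 : alpha₂ d α 0 = α := by simp [alpha₂]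
  have hprod : HasDerivAt (fun η : ℝ => alpha₁ d α η * alpha₂ d α η)
      (-(1/2) * α + α * (1/2)) 0 := by
    have := h1.mul h2
    rwa [ha1, ha2] at this
  have hsum : HasDerivAt (fun η : ℝ => alpha₁ d α η + alpha₂ d α η)
      (-(1/2) + 1/2) 0 := h1.add h2
  have hΔ : HasDerivAt (fun η : ℝ => Δfun d α k η)
      ((-(1/2) * α + α * (1/2)) * Real.sin (2 * k * d)
        + k * (-(1/2) + 1/2) * Real.cos (2 * k * d)) 0 := by
    have hA : HasDerivAt
        (fun η : ℝ => (alpha₁ d α η * alpha₂ d α η - k ^ 2) * Real.sin (2 * k * d))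
        ((-(1/2) * α + α * (1/2)) * Real.sin (2 * k * d)) 0 :=
      (hprod.sub_const (k ^ 2)).mul_const _
    have hB : HasDerivAt
        (fun η : ℝ => k * (alpha₁ d α η + alpha₂ d α η) * Real.cos (2 * k * d))
        (k * (-(1/2) + 1/2) * Real.cos (2 * k * d)) 0 := by
      have := (hsum.const_mul k).mul_const (Real.cos (2 * k * d))
      simpa [mul_assoc] using this
    exact hA.add hB
  have := hΔ.deriv
  rw [this]; ring
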